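/- Let (t_j) be a sequence of positive real numbers that monotonically increases to infinity. Then there exists a sequence (t'_j) of positive reals monotonically increasing to infinity such that t'_j ≤ t_j for all j, and for all positive integers p, q, the products T'_p = ∏_{j=1}^p t'_j satisfy T'_{p+q} ≤ 2^{p+q} · T'_p · T'_q. -/

import Mathlib

open Filter

/-- running minimum of `t i / i` over `1 ≤ i ≤ j` (value `t 1` at `j = 0`). -/
noncomputable def minSlopeAux (t : ℕ → ℝ) : ℕ → ℝ
  | 0 => t 1
  | (j+1) => min (minSlopeAux t j) (t (j+1) / ((j:ℝ)+1))

lemma minSlopeAux_succ (t : ℕ → ℝ) (j : ℕ) :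
    minSlopeAux t (j+1) = min (minSlopeAux t j) (t (j+1) / ((j:ℝ)+1)) := rfl

lemma minSlopeAux_pos (t : ℕ → ℝ) (hpos : ∀ j, 0 < t j) (j : ℕ) :
    0 < minSlopeAux t j := by
  induction j with
  | zero => exact hpos 1
  | succ k ih => exact lt_min ih (div_pos (hpos _) (by positivity))

lemma minSlopeAux_anti (t : ℕ → ℝ) : Antitone (minSlopeAux t) :=
  antitone_nat_of_succ_le fun n => min_le_left _ _

lemma minSlopeAux_le (t : ℕ → ℝ) (j : ℕ) (hj : 0 < j) :
    minSlopeAux t j ≤ t j / (j:ℝ) := by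
  obtain ⟨k, rfl⟩ : ∃ k, j = k + 1 := ⟨j - 1, by omega⟩
  rw [minSlopeAux_succ]
  refine (min_le_right _ _).trans_eq ?_
  push_cast
  ring_nf

/-- the subordinate sequence -/
noncomputable def tSubAux (t : ℕ → ℝ) (j : ℕ) : ℝ :=
  if j = 0 then t 0 else j * minSlopeAux t j

lemma tSubAux_pos (t : ℕ → ℝ) (hpos : ∀ j, 0 < t j) (j : ℕ) :
    0 < tSubAux t j := by
  unfold tSubAux
  split
  · exact hpos 0
  · rename_i h
    have h1 := minSlopeAux_pos t hpos j
    have h2 : (0:ℝ) < j := by exact_mod_cast Nat.pos_of_ne_zero h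
    positivity

lemma tSubAux_eq (t : ℕ → ℝ) (j : ℕ) (hj : 0 < j) :
    tSubAux t j = j * minSlopeAux t j := by
  unfold tSubAux; rw [if_neg (Nat.pos_iff_ne_zero.mp hj)]

theorem exists_subordinate_submultiplicative_seq
    (t : ℕ → ℝ) (hpos : ∀ j, 0 < t j) (hmono : Monotone t)
    (htend : Tendsto t atTop atTop) :
    ∃ t' : ℕ → ℝ, (∀ j, 0 < t' j) ∧ Monotone t' ∧ Tendsto t' atTop atTop ∧
      (∀ j, t' j ≤ t j) ∧
      ∀ p q : ℕ, 0 < p → 0 < q →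
        (∏ j ∈ Finset.Icc 1 (p + q), t' j) ≤
          2 ^ (p + q) * (∏ j ∈ Finset.Icc 1 p, t' j) * (∏ j ∈ Finset.Icc 1 q, t' j) := by
  refine ⟨tSubAux t, tSubAux_pos t hpos, ?_, ?_, ?_, ?_⟩
  · -- Monotone
    apply monotone_nat_of_le_succ
    intro n
    rcases Nat.eq_zero_or_pos n with h | h
    · subst h
      rw [tSubAux_eq t 1 one_pos, minSlopeAux_succ]
      simp only [tSubAux, if_pos rfl, Nat.cast_one, one_mul, Nat.cast_zero, zero_add, div_one]
      show t 0 ≤ min (minSlopeAux t 0) (t 1)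
      have : minSlopeAux t 0 = t 1 := rfl
      rw [this, min_self]
      exact hmono (by norm_num)
    · rw [tSubAux_eq t n h, tSubAux_eq t (n+1) (Nat.succ_pos n), minSlopeAux_succ]
      have hn : (0:ℝ) < n := by exact_mod_cast h
      have hcast : ((n+1 : ℕ):ℝ) = (n:ℝ) + 1 := by push_cast; ring
      rw [hcast]
      rcases le_total (minSlopeAux t n) (t (n+1) / ((n:ℝ)+1)) with hc | hc
      · rw [min_eq_left hc]
        have h0 := (minSlopeAux_pos t hpos n).le
        nlinarith
      · rw [min_eq_right hc]
        have h1 : ((n:ℝ)+1) * (t (n+1) / ((n:ℝ)+1)) = t (n+1) := by field_simp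
        rw [h1]
        have h2 : (n:ℝ) * minSlopeAux t n ≤ n * (t n / n) :=
          mul_le_mul_of_nonneg_left (minSlopeAux_le t n h) hn.le
        have h3 : (n:ℝ) * (t n / n) = t n := by field_simp
        calc (n:ℝ) * minSlopeAux t n ≤ t n := h3 ▸ h2
          _ ≤ t (n+1) := hmono (Nat.le_succ n)
  · -- Tendsto atTop
    rw [tendsto_atTop_atTop]
    intro b
    set M : ℝ := max b 0 with hM
    have hM0 : 0 ≤ M := le_max_right _ _
    obtain ⟨N0, hN0⟩ := (tendsto_atTop_atTop.mp htend) M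
    set N := max N0 1 with hN
    have hN1 : 1 ≤ N := le_max_right _ _
    have hc : 0 < minSlopeAux t N := minSlopeAux_pos t hpos N
    have key : ∀ k, min (minSlopeAux t N) (M / ((N + k : ℕ):ℝ)) ≤ minSlopeAux t (N + k) := by
      intro k
      induction k with
      | zero => exact (min_le_left _ _)
      | succ k ih =>
        have hcast : N + (k+1) = (N + k) + 1 := by omega
        rw [hcast, minSlopeAux_succ]
        have hNk : (0:ℝ) < ((N + k : ℕ):ℝ) := by
          have : 0 < N + k := by omega
          exact_mod_cast this
        have hNk1 : (0:ℝ) < ((N + k : ℕ):ℝ) + 1 := by positivity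
        have hN0N : N0 ≤ N := le_max_left _ _
        have h2 : M / (((N + k:ℕ):ℝ) + 1) ≤ t (N+k+1) / (((N+k:ℕ):ℝ) + 1) := by
          gcongr
          exact hN0 (N+k+1) (by omega)
        have h1 : M / (((N + k:ℕ):ℝ) + 1) ≤ M / ((N + k : ℕ):ℝ) := by
          gcongr
          linarith
        refine le_min ?_ ?_
        · refine le_trans (min_le_min (le_refl _) ?_) ih
          calc M / (((N + k + 1 : ℕ)):ℝ) = M / (((N + k:ℕ):ℝ) + 1) := by push_cast; ring_nf
            _ ≤ M / ((N + k : ℕ):ℝ) := h1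
        · calc min (minSlopeAux t N) (M / ((N + k + 1:ℕ):ℝ)) ≤ M / ((N + k + 1:ℕ):ℝ) :=
                min_le_right _ _
            _ = M / (((N + k:ℕ):ℝ) + 1) := by push_cast; ring_nf
            _ ≤ t (N+k+1) / (((N+k:ℕ):ℝ) + 1) := h2
    obtain ⟨K, hK⟩ := exists_nat_ge (M / minSlopeAux t N)
    refine ⟨max N K, fun a ha => ?_⟩
    have haN : N ≤ a := le_trans (le_max_left _ _) ha
    have haK : (K:ℝ) ≤ a := by exact_mod_cast le_trans (le_max_right N K) ha
    have ha1 : 0 < a := lt_of_lt_of_le hN1 haN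
    have ha0 : (0:ℝ) < a := by exact_mod_cast ha1
    refine le_trans (le_max_left b 0) ?_
    obtain ⟨k, rfl⟩ := Nat.exists_eq_add_of_le haN
    rw [tSubAux_eq t _ ha1]
    have h2 : ((N+k:ℕ):ℝ) * min (minSlopeAux t N) (M / ((N + k : ℕ):ℝ)) ≤
        ((N+k:ℕ):ℝ) * minSlopeAux t (N + k) :=
      mul_le_mul_of_nonneg_left (key k) ha0.le
    refine le_trans ?_ h2
    rw [mul_min_of_nonneg _ _ ha0.le]
    refine le_min ?_ ?_
    · have hle : M / minSlopeAux t N ≤ ((N+k:ℕ):ℝ) := le_trans hK haK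
      calc M = (M / minSlopeAux t N) * minSlopeAux t N := by field_simp
        _ ≤ ((N+k:ℕ):ℝ) * minSlopeAux t N := mul_le_mul_of_nonneg_right hle hc.le
    · rw [mul_div_cancel₀ _ ha0.ne']
  · -- t' ≤ t
    intro j
    rcases Nat.eq_zero_or_pos j with h | h
    · subst h; simp [tSubAux]
    · rw [tSubAux_eq t j h]
      have hj : (0:ℝ) < j := by exact_mod_cast h
      calc (j:ℝ) * minSlopeAux t j ≤ j * (t j / j) :=
            mul_le_mul_of_nonneg_left (minSlopeAux_le t j h) hj.le
        _ = t j := by field_simp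
  · -- submultiplicativity
    intro p q hp hq
    have hmap : ∀ (f : ℕ → ℝ), (∏ j ∈ Finset.Ioc p (p+q), f j) = ∏ j ∈ Finset.Ioc 0 q, f (p + j) := by
      intro f
      have h := Finset.map_add_left_Ioc 0 q p
      rw [Nat.add_zero] at h
      rw [← h, Finset.prod_map]
      rfl
    have hsplit : (∏ j ∈ Finset.Icc 1 (p + q), tSubAux t j) =
        (∏ j ∈ Finset.Icc 1 p, tSubAux t j) * ∏ j ∈ Finset.Ioc p (p+q), tSubAux t j := by
      rw [show Finset.Icc 1 (p+q) = Finset.Ioc 0 (p+q) from Finset.Icc_add_one_left_eq_Ioc 0 (p+q),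
          show Finset.Icc 1 p = Finset.Ioc 0 p from Finset.Icc_add_one_left_eq_Ioc 0 p]
      exact (Finset.prod_Ioc_consecutive _ (Nat.zero_le p) (Nat.le_add_right p q)).symm
    -- pointwise bound
    have hpoint : ∀ j ∈ Finset.Ioc 0 q,
        (j:ℝ) * tSubAux t (p + j) ≤ ((p+j:ℕ):ℝ) * tSubAux t j := by
      intro j hj
      have hj0 : 0 < j := (Finset.mem_Ioc.mp hj).1
      rw [tSubAux_eq t (p+j) (by omega), tSubAux_eq t j hj0]
      have hanti : minSlopeAux t (p+j) ≤ minSlopeAux t j :=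
        minSlopeAux_anti t (Nat.le_add_left j p)
      have hjr : (0:ℝ) ≤ (j:ℝ) := by positivity
      have hpjr : (0:ℝ) ≤ ((p+j:ℕ):ℝ) := by positivity
      calc (j:ℝ) * (((p+j:ℕ):ℝ) * minSlopeAux t (p+j))
          ≤ (j:ℝ) * (((p+j:ℕ):ℝ) * minSlopeAux t j) := by
            apply mul_le_mul_of_nonneg_left _ hjr
            exact mul_le_mul_of_nonneg_left hanti hpjr
        _ = ((p+j:ℕ):ℝ) * ((j:ℝ) * minSlopeAux t j) := by ring
    -- natural number binomial bound
    have hnat : (∏ j ∈ Finset.Ioc 0 q, (p + j)) ≤ 2^(p+q) * ∏ j ∈ Finset.Ioc 0 q, j := by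
      have e1 : (∏ j ∈ Finset.Ioc 0 q, (p + j)) = ∏ j ∈ Finset.Ioc p (p+q), j := by
        have h := Finset.map_add_left_Ioc 0 q p
        rw [Nat.add_zero] at h
        rw [← h, Finset.prod_map]
        rfl
      have e2 : ∀ n : ℕ, (∏ j ∈ Finset.Ioc 0 n, j) = Nat.factorial n := by
        intro n
        induction n with
        | zero => simp
        | succ k ih =>
          rw [← Finset.Icc_add_one_left_eq_Ioc, Finset.prod_Icc_succ_top (by omega),
              Finset.Icc_add_one_left_eq_Ioc, ih, Nat.factorial_succ, Nat.mul_comm]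
      have e4 : Nat.factorial p * (∏ j ∈ Finset.Ioc p (p+q), j) = Nat.factorial (p+q) := by
        rw [← e2 p, Finset.prod_Ioc_consecutive _ (Nat.zero_le p) (Nat.le_add_right p q), e2]
      have hbin : (p+q).choose q ≤ 2^(p+q) := by
        calc (p+q).choose q ≤ ∑ i ∈ Finset.range (p+q+1), (p+q).choose i :=
              Finset.single_le_sum (fun i _ => Nat.zero_le _)
                (Finset.mem_range.mpr (by omega))
          _ = 2^(p+q) := Nat.sum_range_choose (p+q)
      have e5 : Nat.factorial (p+q) = (p+q).choose q * Nat.factorial p * Nat.factorial q :=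
        (Nat.add_choose_mul_factorial_mul_factorial p q).symm
      have e6 : Nat.factorial p * (∏ j ∈ Finset.Ioc p (p+q), j) = Nat.factorial p * ((p+q).choose q * Nat.factorial q) := by
        rw [e4, e5]; ring
      have e7 : (∏ j ∈ Finset.Ioc p (p+q), j) = (p+q).choose q * Nat.factorial q :=
        Nat.eq_of_mul_eq_mul_left (Nat.factorial_pos p) e6
      rw [e1, e7, e2]
      exact Nat.mul_le_mul_right _ hbin
    have hQpos : (0:ℝ) < ∏ j ∈ Finset.Ioc 0 q, (j:ℝ) := by
      apply Finset.prod_pos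
      intro j hj
      exact_mod_cast (Finset.mem_Ioc.mp hj).1
    have hreal : (∏ j ∈ Finset.Ioc 0 q, ((p+j:ℕ):ℝ)) ≤
        2^(p+q) * ∏ j ∈ Finset.Ioc 0 q, (j:ℝ) := by
      rw [show (∏ j ∈ Finset.Ioc 0 q, ((p+j:ℕ):ℝ)) = ((∏ j ∈ Finset.Ioc 0 q, (p+j) : ℕ) : ℝ)
            from (Nat.cast_prod _ _).symm,
          show (∏ j ∈ Finset.Ioc 0 q, (j:ℝ)) = ((∏ j ∈ Finset.Ioc 0 q, j : ℕ) : ℝ)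
            from (Nat.cast_prod _ _).symm]
      exact_mod_cast hnat
    have hprodpos : ∀ (s : Finset ℕ), (0:ℝ) < ∏ j ∈ s, tSubAux t j :=
      fun s => Finset.prod_pos fun j _ => tSubAux_pos t hpos j
    have hmain : (∏ j ∈ Finset.Ioc 0 q, tSubAux t (p + j)) ≤
        2^(p+q) * ∏ j ∈ Finset.Ioc 0 q, tSubAux t j := by
      have h1 : (∏ j ∈ Finset.Ioc 0 q, (j:ℝ)) * (∏ j ∈ Finset.Ioc 0 q, tSubAux t (p + j)) ≤
          (∏ j ∈ Finset.Ioc 0 q, ((p+j:ℕ):ℝ)) * (∏ j ∈ Finset.Ioc 0 q, tSubAux t j) := by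
        rw [← Finset.prod_mul_distrib, ← Finset.prod_mul_distrib]
        apply Finset.prod_le_prod
        · intro j hj
          have hj0 : 0 < j := (Finset.mem_Ioc.mp hj).1
          have hjr : (0:ℝ) < j := by exact_mod_cast hj0
          have hts := tSubAux_pos t hpos (p+j)
          positivity
        · exact hpoint
      have h2 : (∏ j ∈ Finset.Ioc 0 q, ((p+j:ℕ):ℝ)) * (∏ j ∈ Finset.Ioc 0 q, tSubAux t j) ≤
          (2^(p+q) * ∏ j ∈ Finset.Ioc 0 q, (j:ℝ)) * (∏ j ∈ Finset.Ioc 0 q, tSubAux t j) :=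
        mul_le_mul_of_nonneg_right hreal (hprodpos _).le
      have h3 := le_trans h1 h2
      have h4 : (2^(p+q) * ∏ j ∈ Finset.Ioc 0 q, (j:ℝ)) * (∏ j ∈ Finset.Ioc 0 q, tSubAux t j)
          = (∏ j ∈ Finset.Ioc 0 q, (j:ℝ)) * (2^(p+q) * ∏ j ∈ Finset.Ioc 0 q, tSubAux t j) := by
        ring
      rw [h4] at h3
      exact le_of_mul_le_mul_left h3 hQpos
    rw [hsplit, hmap]
    rw [show Finset.Icc 1 q = Finset.Ioc 0 q from Finset.Icc_add_one_left_eq_Ioc 0 q]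
    calc (∏ j ∈ Finset.Icc 1 p, tSubAux t j) * (∏ j ∈ Finset.Ioc 0 q, tSubAux t (p + j))
        ≤ (∏ j ∈ Finset.Icc 1 p, tSubAux t j) * (2^(p+q) * ∏ j ∈ Finset.Ioc 0 q, tSubAux t j) :=
          mul_le_mul_of_nonneg_left hmain (hprodpos _).le
      _ = 2 ^ (p + q) * (∏ j ∈ Finset.Icc 1 p, tSubAux t j) * (∏ j ∈ Finset.Ioc 0 q, tSubAux t j) := by ring
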